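/- For every integer k ≥ 2, the equation cot(πx) = −1/(π(k − x)) has a unique solution x in the open interval (1/2, 1). -/

import Mathlib

open Real

theorem cot_eq_unique_solution (k : ℕ) (hk : 2 ≤ k) :
    ∃! x : ℝ, x ∈ Set.Ioo (1/2 : ℝ) 1 ∧
      Real.cos (π * x) / Real.sin (π * x) = -(1 / (π * ((k : ℝ) - x))) := by
  have hk1 : (2:ℝ) ≤ (k:ℝ) := by exact_mod_cast hk
  set g : ℝ → ℝ := fun x => π * ((k:ℝ) - x) * Real.cos (π * x) + Real.sin (π * x) with hg
  have hsin : ∀ x ∈ Set.Ioo (1/2:ℝ) 1, 0 < Real.sin (π * x) := by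
    intro x hx
    apply Real.sin_pos_of_pos_of_lt_pi
    · have := hx.1; nlinarith [pi_pos]
    · have := hx.2; nlinarith [pi_pos]
  have hkx : ∀ x ∈ Set.Ioo (1/2:ℝ) 1, 0 < (k:ℝ) - x := by
    intro x hx; have := hx.2; linarith
  -- equivalence of the equation with g x = 0
  have key : ∀ x ∈ Set.Ioo (1/2:ℝ) 1,
      (Real.cos (π * x) / Real.sin (π * x) = -(1 / (π * ((k : ℝ) - x))) ↔ g x = 0) := by
    intro x hx
    have hs := hsin x hx
    have hd := hkx x hx
    have hpd : 0 < π * ((k:ℝ) - x) := mul_pos pi_pos hd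
    rw [div_eq_iff hs.ne', hg]
    constructor
    · intro h
      simp only
      have h' : Real.cos (π * x) * (π * ((k:ℝ) - x)) = -Real.sin (π * x) := by
        field_simp at h
        linarith
      linarith [h']
    · intro h
      simp only at h
      field_simp
      linarith
  -- continuity of g
  have hcont : Continuous g := by
    rw [hg]; fun_prop
  -- derivative of g
  have hderiv : ∀ x : ℝ, HasDerivAt g (-(π^2) * ((k:ℝ) - x) * Real.sin (π * x)) x := by
    intro x
    have hlin : HasDerivAt (fun x : ℝ => π * x) π x := by
      simpa using (hasDerivAt_id x).const_mul π
    have hcos : HasDerivAt (fun x : ℝ => Real.cos (π * x)) (-Real.sin (π * x) * π) x :=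
      (Real.hasDerivAt_cos (π * x)).comp x hlin
    have hsin' : HasDerivAt (fun x : ℝ => Real.sin (π * x)) (Real.cos (π * x) * π) x :=
      (Real.hasDerivAt_sin (π * x)).comp x hlin
    have hfac : HasDerivAt (fun x : ℝ => π * ((k:ℝ) - x)) (-π) x := by
      have : HasDerivAt (fun x : ℝ => (k:ℝ) - x) (-1) x := by
        simpa using (hasDerivAt_id x).const_sub (k:ℝ)
      simpa using this.const_mul π
    have := (hfac.mul hcos).add hsin'
    exact this.congr_deriv (by ring)
  -- strict anti on Icc
  have hanti : StrictAntiOn g (Set.Icc (1/2:ℝ) 1) := by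
    apply strictAntiOn_of_deriv_neg (convex_Icc _ _) hcont.continuousOn
    intro x hx
    rw [interior_Icc] at hx
    rw [(hderiv x).deriv]
    have hs := hsin x hx
    have hd := hkx x hx
    have hpos : 0 < π ^ 2 * ((k:ℝ) - x) * Real.sin (π * x) :=
      mul_pos (mul_pos (pow_pos pi_pos 2) hd) hs
    linarith
  -- endpoint values
  have hg1 : g 1 = -(π * ((k:ℝ) - 1)) := by
    simp [hg, mul_one, Real.cos_pi, Real.sin_pi]
  have hghalf : g (1/2) = 1 := by
    show π * ((k:ℝ) - 1/2) * Real.cos (π * (1/2)) + Real.sin (π * (1/2)) = 1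
    rw [show π * (1/2 : ℝ) = π / 2 by ring, Real.cos_pi_div_two, Real.sin_pi_div_two]
    ring
  have hg1neg : g 1 < 0 := by
    rw [hg1]; have : (0:ℝ) < π * ((k:ℝ) - 1) := by nlinarith [pi_pos]
    linarith
  have hgpos : 0 < g (1/2) := by rw [hghalf]; norm_num
  -- existence via IVT
  have hmem : (0:ℝ) ∈ Set.Ioo (g 1) (g (1/2)) := ⟨hg1neg, hgpos⟩
  have hsub := intermediate_value_Ioo' (by norm_num : (1/2:ℝ) ≤ 1) hcont.continuousOn
  obtain ⟨x, hx, hgx⟩ := hsub hmem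
  refine ⟨x, ⟨hx, (key x hx).mpr hgx⟩, ?_⟩
  rintro y ⟨hy, hey⟩
  have hgy : g y = 0 := (key y hy).mp hey
  exact hanti.injOn (Set.Ioo_subset_Icc_self hy) (Set.Ioo_subset_Icc_self hx)
    (by rw [hgy, hgx])
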